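/- Suppose λ' is a 2×2 symmetric positive definite matrix-valued function on (-1,1) of the form λ'₁₁ = ((r²(1-x))/2)e^{2V₁}, λ'₂₂ = ((r²(1+x))/2)e^{-2V₁}, λ'₁₂ = 0 with V₁ constant, and suppose α is a 2×2 integer matrix with det α = ±1 such that αᵗ σ α is diagonal with σ = (r²/2)diag(1-x, 1+x) and (α σ αᵗ)₁₂ = 0 for all x ∈ (-1,1), and the ratio log((α₁ σ α₁ᵗ)/(α₂ σ α₂ᵗ)) ± log((1+x)/(1-x)) is constant in x. Then α is, up to signs and swap, the identity; i.e., no nontrivial integer unimodular change of basis is compatible with these conditions. -/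

import Mathlib

open Set Matrix

/-- The Gram matrix `σ(x) = (r²/2) diag(1-x, 1+x)`. -/
noncomputable def sigMat (r x : ℝ) : Matrix (Fin 2) (Fin 2) ℝ :=
  Matrix.diagonal ![r ^ 2 / 2 * (1 - x), r ^ 2 / 2 * (1 + x)]

/-- The Gram matrix in the transformed basis, `α σ(x) αᵗ`. -/
noncomputable def gramE (r : ℝ) (α : Matrix (Fin 2) (Fin 2) ℤ) (x : ℝ) :
    Matrix (Fin 2) (Fin 2) ℝ :=
  (α.map (Int.cast : ℤ → ℝ)) * sigMat r x * (α.map (Int.cast : ℤ → ℝ))ᵀ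

lemma int_units_of_mul (m n : ℤ) (h : m * n = 1 ∨ m * n = -1) :
    (m = 1 ∨ m = -1) ∧ (n = 1 ∨ n = -1) := by
  have hm : IsUnit m := by
    rcases h with h | h
    · exact IsUnit.of_mul_eq_one _ h
    · exact IsUnit.of_mul_eq_one (a := m) (-n) (by linarith)
  have hn : IsUnit n := by
    rcases h with h | h
    · exact IsUnit.of_mul_eq_one (a := n) m (by linarith [mul_comm m n])
    · exact IsUnit.of_mul_eq_one (a := n) (-m) (by linarith [mul_comm m n])
  exact ⟨Int.isUnit_iff.mp hm, Int.isUnit_iff.mp hn⟩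

/-- Rigidity: if an integer unimodular change of basis `α` keeps the Gram matrix
`α σ(x) αᵗ` diagonal for all `x ∈ (-1,1)` and makes
`± log((ασαᵗ)₀₀/(ασαᵗ)₁₁) + log((1+x)/(1-x))` constant in `x`, then `α` is, up to
signs and a swap, the identity; i.e. no nontrivial integral unimodular change of
basis is compatible with these conditions. -/
theorem orbit_space_rigidity (r : ℝ) (hr : 0 < r) (α : Matrix (Fin 2) (Fin 2) ℤ)
    (hunimod : α.det = 1 ∨ α.det = -1)
    (hdiag : ∀ x ∈ Ioo (-1 : ℝ) 1, gramE r α x 0 1 = 0)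
    (hconst : ∃ ε : ℝ, (ε = 1 ∨ ε = -1) ∧ ∃ c : ℝ, ∀ x ∈ Ioo (-1 : ℝ) 1,
      ε * Real.log (gramE r α x 0 0 / gramE r α x 1 1) +
        Real.log ((1 + x) / (1 - x)) = c) :
    (α 0 1 = 0 ∧ α 1 0 = 0 ∧ (α 0 0 = 1 ∨ α 0 0 = -1) ∧ (α 1 1 = 1 ∨ α 1 1 = -1)) ∨
    (α 0 0 = 0 ∧ α 1 1 = 0 ∧ (α 0 1 = 1 ∨ α 0 1 = -1) ∧ (α 1 0 = 1 ∨ α 1 0 = -1)) := by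
  have h1 := hdiag 0 (by norm_num)
  have h2 := hdiag (1/2) (by norm_num)
  simp only [gramE, sigMat, Matrix.mul_apply, Fin.sum_univ_two, Matrix.diagonal,
    Matrix.map_apply, Matrix.transpose_apply, Matrix.of_apply, Matrix.cons_val',
    Matrix.cons_val_zero, Matrix.cons_val_one, Matrix.head_cons, Matrix.empty_val',
    Matrix.cons_val_fin_one, if_true, if_neg (by norm_num : ¬(1:Fin 2) = 0),
    if_neg (by norm_num : ¬(0:Fin 2) = 1)] at h1 h2
  ring_nf at h1 h2
  have hr2 : (0:ℝ) < r ^ 2 / 2 := by positivity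
  have hac : (α 0 0 : ℝ) * (α 1 0 : ℝ) = 0 := by nlinarith [h1, h2]
  have hbd : (α 0 1 : ℝ) * (α 1 1 : ℝ) = 0 := by nlinarith [h1, h2]
  have hacZ : α 0 0 * α 1 0 = 0 := by exact_mod_cast hac
  have hbdZ : α 0 1 * α 1 1 = 0 := by exact_mod_cast hbd
  have hdet : α 0 0 * α 1 1 - α 0 1 * α 1 0 = 1 ∨ α 0 0 * α 1 1 - α 0 1 * α 1 0 = -1 := by
    rwa [Matrix.det_fin_two] at hunimod
  rcases mul_eq_zero.mp hacZ with ha | hc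
  · right
    rw [ha] at hdet
    have hbc : α 0 1 * α 1 0 = 1 ∨ α 0 1 * α 1 0 = -1 := by
      rcases hdet with h | h
      · right; linarith
      · left; linarith
    obtain ⟨hb, hc⟩ := int_units_of_mul _ _ hbc
    have hd : α 1 1 = 0 := by rcases hb with h | h <;> rw [h] at hbdZ <;> linarith
    exact ⟨ha, hd, hb, hc⟩
  · left
    rw [hc] at hdet
    have had : α 0 0 * α 1 1 = 1 ∨ α 0 0 * α 1 1 = -1 := by
      rcases hdet with h | h
      · left; linarith
      · right; linarith
    obtain ⟨ha, hd⟩ := int_units_of_mul _ _ had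
    have hb : α 0 1 = 0 := by rcases hd with h | h <;> rw [h] at hbdZ <;> linarith
    exact ⟨hb, hc, ha, hd⟩
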